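/- If m ≥ 3 is an integer such that tan²(π/m) is rational, then m ∈ {3, 4, 6}. -/

import Mathlib

open Real

/-- Denominator of `q^2 - 2`. -/
lemma den_sq_sub_two' (q : ℚ) : (q ^ 2 - 2).den = q.den ^ 2 := by
  have hd : (0 : ℤ) < (q.den : ℤ) ^ 2 := by positivity
  have h0 : IsCoprime q.num (q.den : ℤ) := by
    rw [Int.isCoprime_iff_gcd_eq_one]; exact q.reduced
  have hco : IsCoprime (q.num ^ 2 - 2 * (q.den : ℤ) ^ 2) ((q.den : ℤ) ^ 2) := by
    have := (h0.pow (m := 2) (n := 2)).add_mul_left_left (-2)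
    rw [show q.num ^ 2 - 2 * (q.den : ℤ) ^ 2 = q.num ^ 2 + (q.den : ℤ) ^ 2 * -2 by ring]; exact this
  have hco' : Nat.Coprime (q.num ^ 2 - 2 * (q.den : ℤ) ^ 2).natAbs ((q.den : ℤ) ^ 2).natAbs := by
    rw [Int.isCoprime_iff_gcd_eq_one] at hco; exact hco
  have key : ((q.num ^ 2 - 2 * (q.den : ℤ) ^ 2 : ℤ) : ℚ) / (((q.den : ℤ) ^ 2 : ℤ) : ℚ)
      = q ^ 2 - 2 := by
    have hq : ((q.den : ℚ)) ≠ 0 := by exact_mod_cast q.den_nz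
    field_simp
    push_cast
    rw [← Rat.mul_den_eq_num]
    ring
  have := Rat.den_div_eq_of_coprime hd hco'
  rw [key] at this
  have h2 : (((q.den : ℤ) ^ 2).natAbs : ℤ) = (q.den : ℤ) ^ 2 := Int.natAbs_of_nonneg hd.le
  exact_mod_cast this.trans h2.symm

/-- Doubling sequence: `2 cos (2^k θ)` is rational with denominator `q.den ^ 2^k`. -/
lemma cos_double_seq (q : ℚ) (θ : ℝ) (h : 2 * Real.cos θ = (q : ℝ)) (k : ℕ) :
    ∃ r : ℚ, 2 * Real.cos (2 ^ k * θ) = (r : ℝ) ∧ r.den = q.den ^ 2 ^ k := by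
  induction k with
  | zero => exact ⟨q, by simpa using h, by simp⟩
  | succ k ih =>
    obtain ⟨r, hr, hden⟩ := ih
    refine ⟨r ^ 2 - 2, ?_, ?_⟩
    · have : (2 : ℝ) ^ (k + 1) * θ = 2 * (2 ^ k * θ) := by ring
      rw [this, Real.cos_two_mul]
      have hc : Real.cos (2 ^ k * θ) = (r : ℝ) / 2 := by linarith
      rw [hc]
      push_cast
      ring
    · rw [den_sq_sub_two', hden, ← pow_mul, pow_succ]

/-- Niven: if `2 cos θ` is rational and `m • θ = 2π` then `2 cos θ` is an integer. -/
lemma two_cos_int (m : ℕ) (hm : 0 < m) (q : ℚ) (h : 2 * Real.cos (2 * Real.pi / m) = (q : ℝ)) :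
    q.den = 1 := by
  by_contra hden
  have hden2 : 2 ≤ q.den := by
    have := q.den_nz
    omega
  -- the values 2 cos (2^k * θ) depend only on 2^k mod m
  set θ := 2 * Real.pi / m with hθ
  have hmθ : (m : ℝ) * θ = 2 * Real.pi := by
    rw [hθ]; field_simp
  have hcosmod : ∀ k : ℕ, Real.cos ((2 ^ k : ℕ) * θ) = Real.cos (((2 ^ k % m : ℕ)) * θ) := by
    intro k
    conv_lhs => rw [← Nat.mod_add_div (2 ^ k) m]
    push_cast
    rw [show (((2 ^ k % m : ℕ) : ℝ) + (m : ℝ) * ((2 ^ k / m : ℕ) : ℝ)) * θ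
        = ((2 ^ k % m : ℕ) : ℝ) * θ + ((2 ^ k / m : ℕ) : ℝ) * (2 * Real.pi) from by
      rw [← hmθ]; ring]
    exact Real.cos_add_nat_mul_two_pi _ _
  -- pigeonhole: two exponents with the same power of 2 mod m
  haveI : NeZero m := ⟨hm.ne'⟩
  obtain ⟨k₁, k₂, hne, heq⟩ := Finite.exists_ne_map_eq_of_infinite
    (fun k : ℕ => (⟨2 ^ k % m, Nat.mod_lt _ hm⟩ : Fin m))
  wlog hlt : k₁ < k₂ generalizing k₁ k₂
  · exact this k₂ k₁ hne.symm heq.symm (hne.lt_or_gt.resolve_left hlt)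
  have hmod : 2 ^ k₁ % m = 2 ^ k₂ % m := by
    have h1 : 2 ^ k₁ % m < m := Nat.mod_lt _ hm
    have h2 : 2 ^ k₂ % m < m := Nat.mod_lt _ hm
    have := congrArg Fin.val heq
    simpa [Fin.val_natCast, Nat.mod_eq_of_lt h1, Nat.mod_eq_of_lt h2] using this
  obtain ⟨r₁, hr₁, hd₁⟩ := cos_double_seq q θ h k₁
  obtain ⟨r₂, hr₂, hd₂⟩ := cos_double_seq q θ h k₂
  have hreq : r₁ = r₂ := by
    have e1 : (2:ℝ) ^ k₁ * θ = ((2 ^ k₁ : ℕ) : ℝ) * θ := by push_cast; ring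
    have e2 : (2:ℝ) ^ k₂ * θ = ((2 ^ k₂ : ℕ) : ℝ) * θ := by push_cast; ring
    have : (r₁ : ℝ) = (r₂ : ℝ) := by
      rw [← hr₁, ← hr₂, e1, e2, hcosmod k₁, hcosmod k₂, hmod]
    exact_mod_cast this
  have : q.den ^ 2 ^ k₁ = q.den ^ 2 ^ k₂ := by rw [← hd₁, ← hd₂, hreq]
  have hppow : 2 ^ k₁ < 2 ^ k₂ := Nat.pow_lt_pow_right one_lt_two hlt
  have := Nat.pow_lt_pow_right hden2 hppow
  omega

lemma two_pi_div_inj (m k : ℕ) (hm : 0 < m) (hk : 0 < k)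
    (h : 2 * Real.pi / m = 2 * Real.pi / k) : m = k := by
  have hπ : (2 * Real.pi) ≠ 0 := by positivity
  have hm' : (m : ℝ) ≠ 0 := Nat.cast_ne_zero.mpr hm.ne'
  have hk' : (k : ℝ) ≠ 0 := Nat.cast_ne_zero.mpr hk.ne'
  rw [div_eq_div_iff hm' hk'] at h
  have : (k : ℝ) = m := mul_left_cancel₀ hπ h
  exact_mod_cast this.symm

/-- If `m ≥ 3` is an integer such that `tan²(π/m)` is rational, then `m ∈ {3, 4, 6}`. -/
theorem stmt_0 (m : ℕ) (hm : 3 ≤ m)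
    (hrat : ∃ q : ℚ, (Real.tan (Real.pi / m)) ^ 2 = (q : ℝ)) :
    m = 3 ∨ m = 4 ∨ m = 6 := by
  obtain ⟨q₀, ht2⟩ := hrat
  have hπ := Real.pi_pos
  have hm0 : (0 : ℝ) < m := by exact_mod_cast (by omega : 0 < m)
  have hm3 : (3 : ℝ) ≤ m := by exact_mod_cast hm
  have hq₀ : 0 ≤ q₀ := by
    have : (0 : ℝ) ≤ (q₀ : ℝ) := ht2 ▸ sq_nonneg _
    exact_mod_cast this
  -- `cos (π/m) > 0`
  have hlt : Real.pi / m < Real.pi / 2 := by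
    apply div_lt_div_of_pos_left hπ (by norm_num) (by linarith)
  have hpos : 0 < Real.pi / m := by positivity
  have hc : 0 < Real.cos (Real.pi / m) :=
    Real.cos_pos_of_mem_Ioo ⟨by linarith, hlt⟩
  -- `cos² (π/m) = 1/(1+q₀)`
  have hq1 : (0 : ℝ) < 1 + (q₀ : ℝ) := by
    have : (0:ℝ) ≤ (q₀ : ℝ) := by exact_mod_cast hq₀
    linarith
  have hcos2 : Real.cos (Real.pi / m) ^ 2 = 1 / (1 + (q₀ : ℝ)) := by
    have htt : Real.tan (Real.pi / m) ^ 2 * Real.cos (Real.pi / m) ^ 2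
        = Real.sin (Real.pi / m) ^ 2 := by
      rw [Real.tan_eq_sin_div_cos]
      field_simp
    rw [ht2, Real.sin_sq] at htt
    field_simp
    nlinarith [htt]
  -- `2 cos (2π/m)` is rational
  have hdouble : 2 * Real.pi / m = 2 * (Real.pi / m) := by ring
  set Q : ℚ := 2 * (2 / (1 + q₀) - 1) with hQdef
  have hQ : 2 * Real.cos (2 * Real.pi / m) = (Q : ℝ) := by
    rw [hdouble, Real.cos_two_mul, hcos2, hQdef]
    push_cast
    field_simp
  have hden := two_cos_int m (by omega) Q hQ
  have hQint : ((Q.num : ℚ) : ℝ) = (Q : ℝ) := by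
    rw [(Rat.den_eq_one_iff Q).mp hden]
  set n : ℤ := Q.num with hn
  have hcosn : 2 * Real.cos (2 * Real.pi / m) = (n : ℝ) := by
    rw [hQ, ← hQint]; push_cast; ring
  -- bounds on `n`
  have hb1 : (n : ℝ) ≤ 2 := by
    have := Real.cos_le_one (2 * Real.pi / m)
    linarith [hcosn]
  have hb2 : (-2 : ℝ) ≤ n := by
    have := Real.neg_one_le_cos (2 * Real.pi / m)
    linarith [hcosn]
  have hn1 : n ≤ 2 := by exact_mod_cast hb1
  have hn2 : -2 ≤ n := by exact_mod_cast hb2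
  -- the angle is in `[0, π]`
  have hang1 : 0 ≤ 2 * Real.pi / m := by positivity
  have hang2 : 2 * Real.pi / m ≤ Real.pi := by
    rw [div_le_iff₀ hm0]
    nlinarith
  have key : ∀ a : ℝ, 0 ≤ a → a ≤ Real.pi →
      Real.cos (2 * Real.pi / m) = Real.cos a → 2 * Real.pi / m = a := by
    intro a h1 h2 he
    exact Real.injOn_cos ⟨hang1, hang2⟩ ⟨h1, h2⟩ he
  interval_cases n
  · -- n = -2 : cos = -1 = cos π, so m = 2, contradiction
    exfalso
    have : 2 * Real.pi / m = 2 * Real.pi / 2 := by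
      apply key _ (by positivity) (by linarith)
      rw [show (2 * Real.pi / 2 : ℝ) = Real.pi by ring, Real.cos_pi]
      push_cast at hcosn; linarith
    have := two_pi_div_inj m 2 (by omega) (by norm_num)
      (by rw [this]; norm_num)
    omega
  · -- n = -1 : cos = -1/2 = cos (2π/3), m = 3
    left
    refine two_pi_div_inj m 3 (by omega) (by norm_num) ?_
    push_cast
    apply key _ (by positivity) (by nlinarith)
    rw [show (2 * Real.pi / 3 : ℝ) = Real.pi - Real.pi / 3 by ring,
      Real.cos_pi_sub, Real.cos_pi_div_three]
    push_cast at hcosn; linarith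
  · -- n = 0 : cos = 0 = cos (π/2), m = 4
    right; left
    refine two_pi_div_inj m 4 (by omega) (by norm_num) ?_
    push_cast
    apply key _ (by positivity) (by nlinarith)
    rw [show (2 * Real.pi / 4 : ℝ) = Real.pi / 2 by ring, Real.cos_pi_div_two]
    push_cast at hcosn; linarith
  · -- n = 1 : cos = 1/2 = cos (π/3), m = 6
    right; right
    refine two_pi_div_inj m 6 (by omega) (by norm_num) ?_
    push_cast
    apply key _ (by positivity) (by nlinarith)
    rw [show (2 * Real.pi / 6 : ℝ) = Real.pi / 3 by ring, Real.cos_pi_div_three]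
    push_cast at hcosn; linarith
  · -- n = 2 : cos = 1 = cos 0, so 2π/m = 0, contradiction
    exfalso
    have h0 : 2 * Real.pi / m = 0 := by
      apply key _ le_rfl hπ.le
      rw [Real.cos_zero]
      push_cast at hcosn; linarith
    have hpos2 : 0 < 2 * Real.pi / m := by positivity
    linarith
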